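/- Let z ∈ Σ* and θ an antimorphic involution. If |C_θ(z)| ≠ 1, then |C_θ(z^i)| < |C_θ(z^{i+1})| for all i ≥ 1. -/

import Mathlib

variable {α : Type*}

/-- θ is an antimorphic involution on Σ* : θ(uv) = θ(v)θ(u) and θ² = id. -/
def IsAntimorphicInvolution (θ : List α → List α) : Prop :=
  (∀ u v : List α, θ (u ++ v) = θ v ++ θ u) ∧ ∀ u : List α, θ (θ u) = u

/-- The set of θ-conjugates of w: C_θ(w) = { θ(v) ++ u : w = u ++ v }. -/
def thetaConjugates (θ : List α → List α) (w : List α) : Set (List α) :=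
  {x | ∃ u v : List α, w = u ++ v ∧ x = θ v ++ u}

/-- n-fold concatenation power of a word. -/
def listPow (z : List α) (n : ℕ) : List α := (List.replicate n z).flatten

/-- A word is primitive if it is not a proper power. -/
def Primitive (z : List α) : Prop :=
  z ≠ [] ∧ ∀ (t : List α) (k : ℕ), z = listPow t k → k = 1

/-- The conjugacy class of w: { v ++ u : w = u ++ v }. -/
def conjClass (w : List α) : Set (List α) := {x | ∃ u v : List α, w = u ++ v ∧ x = v ++ u}

section Stmt5Aux

lemma aux_getElem_congr {l : List α} {a b : ℕ} (hab : a = b) {ha : a < l.length} :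
    l[a]'ha = l[b]'(hab ▸ ha) := by subst hab; rfl

variable (θ : List α → List α)

lemma aux_theta_nil (hθ : IsAntimorphicInvolution θ) : θ [] = [] := by
  have h := hθ.1 [] []
  simp only [List.append_nil] at h
  have hl := congrArg List.length h
  simp only [List.length_append] at hl
  have : (θ ([] : List α)).length = 0 := by omega
  exact List.eq_nil_of_length_eq_zero this

lemma aux_le_length (hθ : IsAntimorphicInvolution θ) : ∀ u : List α, u.length ≤ (θ u).length := by
  intro u
  induction u with
  | nil => simp
  | cons a t ih =>
    have h : θ (a :: t) = θ t ++ θ [a] := by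
      have := hθ.1 [a] t
      simpa using this
    have hne : θ [a] ≠ [] := by
      intro hh
      have h2 := hθ.2 [a]
      rw [hh, aux_theta_nil θ hθ] at h2
      exact List.cons_ne_nil a [] h2.symm
    have h1 : 1 ≤ (θ [a]).length := by
      cases e : θ [a] with
      | nil => exact absurd e hne
      | cons b l => simp
    rw [h]
    simp only [List.length_append, List.length_cons]
    omega

lemma aux_theta_length (hθ : IsAntimorphicInvolution θ) (u : List α) :
    (θ u).length = u.length := by
  have h1 := aux_le_length θ hθ u
  have h2 := aux_le_length θ hθ (θ u)
  rw [hθ.2 u] at h2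
  omega

/-- the letter involution underlying θ -/
def sigmaOf (a : α) : α := (θ [a]).getD 0 a

lemma aux_theta_single (hθ : IsAntimorphicInvolution θ) (a : α) :
    θ [a] = [sigmaOf θ a] := by
  have hl : (θ [a]).length = 1 := by rw [aux_theta_length θ hθ]; rfl
  obtain ⟨b, hb⟩ := List.length_eq_one_iff.mp hl
  rw [hb]
  simp [sigmaOf, hb]

lemma aux_sigma_sigma (hθ : IsAntimorphicInvolution θ) (a : α) :
    sigmaOf θ (sigmaOf θ a) = a := by
  have h := hθ.2 [a]
  rw [aux_theta_single θ hθ a, aux_theta_single θ hθ (sigmaOf θ a)] at h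
  simpa using h

lemma aux_theta_eq (hθ : IsAntimorphicInvolution θ) (u : List α) :
    θ u = (u.map (sigmaOf θ)).reverse := by
  induction u with
  | nil => simp [aux_theta_nil θ hθ]
  | cons a t ih =>
    have h : θ (a :: t) = θ t ++ θ [a] := by
      have := hθ.1 [a] t
      simpa using this
    rw [h, ih, aux_theta_single θ hθ a]
    simp

lemma listPow_succ (z : List α) (m : ℕ) : listPow z (m + 1) = z ++ listPow z m := by
  simp [listPow, List.replicate_succ]

lemma listPow_succ' (z : List α) (m : ℕ) : listPow z (m + 1) = listPow z m ++ z := by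
  rw [listPow, List.replicate_succ', List.flatten_append]
  simp [listPow]

lemma thetaConjugates_eq_image [DecidableEq (List α)] (w : List α) :
    thetaConjugates θ w =
      ↑((Finset.range (w.length + 1)).image fun k => θ (w.drop k) ++ w.take k) := by
  ext x
  simp only [thetaConjugates, Set.mem_setOf_eq, Finset.coe_image, Set.mem_image,
    Finset.mem_coe, Finset.mem_range, Nat.lt_succ_iff]
  constructor
  · rintro ⟨u, v, rfl, rfl⟩
    refine ⟨u.length, by simp, ?_⟩
    rw [List.drop_left, List.take_left]

  · rintro ⟨k, hk, rfl⟩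
    exact ⟨w.take k, w.drop k, (List.take_append_drop k w).symm, rfl⟩

lemma aux_extract (hθ : IsAntimorphicInvolution θ) (w : List α) (j k : ℕ)
    (hjk : j < k) (hk : k ≤ w.length)
    (heq : θ (w.drop k) ++ w.take k = θ (w.drop j) ++ w.take j)
    (t : ℕ) (ht : t < k - j) (h1 : t < w.length) (h2 : k - 1 - t < w.length) :
    w[t]'h1 = sigmaOf θ (w[k - 1 - t]'h2) := by
  rw [aux_theta_eq θ hθ, aux_theta_eq θ hθ] at heq
  have hlen : w.length - k + t <
      (((w.drop k).map (sigmaOf θ)).reverse ++ w.take k).length := by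
    simp only [List.length_append, List.length_reverse, List.length_map, List.length_drop,
      List.length_take]
    omega
  have e := List.getElem_of_eq heq hlen
  rw [List.getElem_append_right (by
    simp only [List.length_reverse, List.length_map, List.length_drop]; omega)] at e
  rw [List.getElem_append_left (by
    simp only [List.length_reverse, List.length_map, List.length_drop]; omega)] at e
  simp only [List.length_reverse, List.length_map, List.length_drop, List.getElem_take,
    List.getElem_reverse, List.getElem_map, List.getElem_drop] at e
  rw [aux_getElem_congr (show w.length - k + t - (w.length - k) = t by omega)] at e
  rw [aux_getElem_congr
    (show j + (w.length - j - 1 - (w.length - k + t)) = k - 1 - t by omega)] at e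
  exact e

lemma aux_const (hθ : IsAntimorphicInvolution θ) (c : α) (hc : sigmaOf θ c = c) (m : ℕ) :
    thetaConjugates θ (List.replicate m c) = {List.replicate m c} := by
  ext x
  simp only [Set.mem_singleton_iff]
  constructor
  · rintro ⟨u, v, huv, rfl⟩
    have hlen : m = u.length + v.length := by
      have := congrArg List.length huv
      simpa using this
    have hu : u = List.replicate u.length c := by
      apply List.eq_replicate_of_mem
      intro b hb
      have hbm : b ∈ List.replicate m c := by
        rw [huv]; exact List.mem_append.mpr (Or.inl hb)
      exact List.eq_of_mem_replicate hbm
    have hv : v = List.replicate v.length c := by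
      apply List.eq_replicate_of_mem
      intro b hb
      have hbm : b ∈ List.replicate m c := by
        rw [huv]; exact List.mem_append.mpr (Or.inr hb)
      exact List.eq_of_mem_replicate hbm
    rw [hu, hv, aux_theta_eq θ hθ, List.map_replicate, hc, List.reverse_replicate,
      List.replicate_append_replicate]
    congr 1
    omega
  · rintro rfl
    exact ⟨List.replicate m c, [], by simp, by simp [aux_theta_nil θ hθ]⟩

end Stmt5Aux

theorem stmt5 (θ : List α → List α) (hθ : IsAntimorphicInvolution θ) (z : List α)
    (h : (thetaConjugates θ z).ncard ≠ 1) (i : ℕ) (hi : 1 ≤ i) :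
    (thetaConjugates θ (listPow z i)).ncard < (thetaConjugates θ (listPow z (i + 1))).ncard := by
  classical
  by_cases hz : z = []
  · exfalso
    apply h
    have hone : thetaConjugates θ z = {[]} := by
      subst hz
      ext x
      simp only [Set.mem_singleton_iff]
      constructor
      · rintro ⟨u, v, huv, rfl⟩
        obtain ⟨rfl, rfl⟩ := List.append_eq_nil_iff.mp huv.symm
        simp [aux_theta_nil θ hθ]
      · rintro rfl
        exact ⟨[], [], rfl, by simp [aux_theta_nil θ hθ]⟩
    rw [hone, Set.ncard_singleton]
  have hn1 : 1 ≤ z.length := List.length_pos_iff.mpr hz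
  have hL : (listPow z (i + 1)).length = (listPow z i).length + z.length := by
    rw [listPow_succ', List.length_append]
  have key : ∀ w : List α, (thetaConjugates θ w).ncard =
      ((Finset.range (w.length + 1)).image fun k => θ (w.drop k) ++ w.take k).card := by
    intro w
    rw [thetaConjugates_eq_image θ w, Set.ncard_coe_finset]
  rw [key, key]
  by_contra hcon
  push_neg at hcon
  -- compatibility of conjugates under appending
  have compat : ∀ j, j ≤ (listPow z i).length →
      θ z ++ (θ ((listPow z i).drop j) ++ (listPow z i).take j) =
        θ ((listPow z (i + 1)).drop j) ++ (listPow z (i + 1)).take j := by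
    intro j hj
    have h1 : (listPow z (i + 1)).drop j = (listPow z i).drop j ++ z := by
      rw [listPow_succ' z i]
      exact List.drop_append_of_le_length hj
    have h2 : (listPow z (i + 1)).take j = (listPow z i).take j := by
      rw [listPow_succ' z i]
      exact List.take_append_of_le_length hj
    rw [h1, h2, hθ.1, List.append_assoc]
  have hinj : Function.Injective (fun x : List α => θ z ++ x) :=
    fun a b hab => List.append_cancel_left hab
  have hsub : ((Finset.range ((listPow z i).length + 1)).image
        fun k => θ ((listPow z i).drop k) ++ (listPow z i).take k).image
        (fun x => θ z ++ x) ⊆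
      (Finset.range ((listPow z (i + 1)).length + 1)).image
        fun k => θ ((listPow z (i + 1)).drop k) ++ (listPow z (i + 1)).take k := by
    intro x hx
    simp only [Finset.mem_image, Finset.mem_range, Nat.lt_succ_iff] at hx ⊢
    obtain ⟨y, ⟨j, hj, rfl⟩, rfl⟩ := hx
    exact ⟨j, by omega, (compat j hj).symm⟩
  have hcard : (Finset.range ((listPow z (i + 1)).length + 1)).image
        (fun k => θ ((listPow z (i + 1)).drop k) ++ (listPow z (i + 1)).take k) =
      ((Finset.range ((listPow z i).length + 1)).image
        fun k => θ ((listPow z i).drop k) ++ (listPow z i).take k).image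
        (fun x => θ z ++ x) := by
    refine (Finset.eq_of_subset_of_card_le hsub ?_).symm
    rw [Finset.card_image_of_injective _ hinj]
    exact hcon
  have getj : ∀ k, k ≤ (listPow z (i + 1)).length → ∃ j ≤ (listPow z i).length,
      θ ((listPow z (i + 1)).drop k) ++ (listPow z (i + 1)).take k =
        θ ((listPow z (i + 1)).drop j) ++ (listPow z (i + 1)).take j := by
    intro k hk
    have hmem : (θ ((listPow z (i + 1)).drop k) ++ (listPow z (i + 1)).take k) ∈
        (Finset.range ((listPow z (i + 1)).length + 1)).image
          (fun k => θ ((listPow z (i + 1)).drop k) ++ (listPow z (i + 1)).take k) :=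
      Finset.mem_image.mpr ⟨k, Finset.mem_range.mpr (by omega), rfl⟩
    rw [hcard] at hmem
    obtain ⟨y, hy, hyx⟩ := Finset.mem_image.mp hmem
    obtain ⟨j, hj, rfl⟩ := Finset.mem_image.mp hy
    rw [Finset.mem_range, Nat.lt_succ_iff] at hj
    refine ⟨j, hj, ?_⟩
    rw [← hyx, compat j hj]
  -- index conversion lemmas
  have e1 : ∀ t (ht : t < z.length),
      (listPow z (i + 1))[t]'(by omega) = z[t]'ht := by
    intro t ht
    rw [List.getElem_of_eq (listPow_succ z i), List.getElem_append_left ht]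
  have e2 : ∀ s (hs : s < z.length),
      (listPow z (i + 1))[(listPow z i).length + s]'(by omega) = z[s]'hs := by
    intro s hs
    rw [List.getElem_of_eq (listPow_succ' z i), List.getElem_append_right (by omega)]
    exact aux_getElem_congr (by omega)
  -- main consequence at k = full length
  have hA1 : ∀ t (ht : t < z.length),
      z[t]'ht = sigmaOf θ (z[z.length - 1 - t]'(by omega)) := by
    intro t ht
    obtain ⟨j, hj, heq⟩ := getj (listPow z (i + 1)).length (le_refl _)
    have hex := aux_extract θ hθ (listPow z (i + 1)) j (listPow z (i + 1)).length
      (by omega) (le_refl _) heq t (by omega) (by omega) (by omega)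
    have hidx : (listPow z (i + 1))[(listPow z (i + 1)).length - 1 - t]'(by omega) =
        z[z.length - 1 - t]'(by omega) := by
      rw [aux_getElem_congr (show (listPow z (i + 1)).length - 1 - t =
        (listPow z i).length + (z.length - 1 - t) by omega)]
      exact e2 _ (by omega)
    rw [← e1 t ht, ← hidx]
    exact hex
  -- main consequence at k = full length - 1, when z.length ≥ 2
  have hA2 : 2 ≤ z.length → ∀ t (ht : t < z.length - 1),
      z[t]'(by omega) = sigmaOf θ (z[z.length - 2 - t]'(by omega)) := by
    intro h2n t ht
    obtain ⟨j, hj, heq⟩ := getj ((listPow z (i + 1)).length - 1) (by omega)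
    have hex := aux_extract θ hθ (listPow z (i + 1)) j ((listPow z (i + 1)).length - 1)
      (by omega) (by omega) heq t (by omega) (by omega) (by omega)
    have hidx : (listPow z (i + 1))[(listPow z (i + 1)).length - 1 - 1 - t]'(by omega) =
        z[z.length - 2 - t]'(by omega) := by
      rw [aux_getElem_congr (show (listPow z (i + 1)).length - 1 - 1 - t =
        (listPow z i).length + (z.length - 2 - t) by omega)]
      exact e2 _ (by omega)
    rw [← e1 t (by omega), ← hidx]
    exact hex
  have hσσ := aux_sigma_sigma θ hθ
  -- all letters of z are equal
  have hconst : ∀ s (hs : s < z.length), z[s]'hs = z[0]'(by omega) := by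
    intro s
    induction s with
    | zero => intro hs; rfl
    | succ s ih =>
      intro hs
      have h2n : 2 ≤ z.length := by omega
      have ea := hA1 (z.length - 2 - s) (by omega)
      have eb := hA2 h2n (z.length - 2 - s) (by omega)
      rw [aux_getElem_congr (show z.length - 1 - (z.length - 2 - s) = s + 1 by omega)] at ea
      rw [aux_getElem_congr (show z.length - 2 - (z.length - 2 - s) = s by omega)] at eb
      have hab : sigmaOf θ (z[s + 1]'hs) = sigmaOf θ (z[s]'(by omega)) := by
        rw [← ea, ← eb]
      have h4 := congrArg (sigmaOf θ) hab
      rw [hσσ, hσσ] at h4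
      rw [h4]
      exact ih (by omega)
  have hc0 : 0 < z.length := hn1
  have hfix : sigmaOf θ (z[0]'hc0) = z[0]'hc0 := by
    have ea := hA1 0 hc0
    rw [aux_getElem_congr (show z.length - 1 - 0 = z.length - 1 by omega)] at ea
    rw [hconst (z.length - 1) (by omega)] at ea
    exact ea.symm
  have hzrep : z = List.replicate z.length (z[0]'hc0) := by
    apply List.ext_getElem (by simp)
    intro s h1 h2
    rw [List.getElem_replicate]
    exact hconst s h1
  apply h
  have hone := aux_const θ hθ (z[0]'hc0) hfix z.length
  rw [← hzrep] at hone
  rw [hone, Set.ncard_singleton]
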